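/- arXiv:2006.11970 — 2 statements merged into one kernel-verified Lean document; each statement's English description precedes it below -/
import Mathlib

section
/- Let A be an ancestral set in a DAG G that is a Bayesian network for X = (X_1,...,X_d), and suppose E[Var(X_j | pa(j))] = σ² for all j. Then for any j ∉ A with pa(j) ⊆ A, E[Var(X_j | X_A)] = σ². -/
open MeasureTheory ProbabilityTheory

/-- The σ-algebra generated by the variables `X i` for `i ∈ S`. -/
noncomputable def tupleAlg {Ω : Type*} [MeasurableSpace Ω] {d : ℕ}
    (X : Fin d → Ω → ℝ) (S : Finset (Fin d)) : MeasurableSpace Ω :=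
  MeasurableSpace.comap (fun ω (i : S) => X i ω) (by infer_instance)

/-- The residual variance `E[Var(X_j | X_S)]`. -/
noncomputable def resVar {Ω : Type*} [MeasurableSpace Ω] (μ : Measure Ω) {d : ℕ}
    (X : Fin d → Ω → ℝ) (S : Finset (Fin d)) (j : Fin d) : ℝ :=
  ∫ ω, (μ[(fun ω' => (X j ω' - (μ[X j | tupleAlg X S]) ω') ^ 2) | tupleAlg X S]) ω ∂μ

/-- `i` is a descendant of `j` in the DAG with parent map `pa` (directed path `j → ⋯ → i`). -/
def IsDesc {d : ℕ} (pa : Fin d → Finset (Fin d)) (j i : Fin d) : Prop :=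
  Relation.TransGen (fun a b => a ∈ pa b) j i

/-- The Markov condition, in the form used in the paper: conditioning `X_j` on any set of
its nondescendants containing its parents is the same as conditioning on its parents. -/
def MarkovCond {Ω : Type*} [MeasurableSpace Ω] (μ : Measure Ω) {d : ℕ}
    (X : Fin d → Ω → ℝ) (pa : Fin d → Finset (Fin d)) : Prop :=
  ∀ (j : Fin d) (S : Finset (Fin d)), pa j ⊆ S →
    (∀ i ∈ S, i ≠ j ∧ ¬ IsDesc pa j i) →
    ∀ φ : ℝ → ℝ, Measurable φ → Integrable (fun ω => φ (X j ω)) μ →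
      μ[(fun ω => φ (X j ω)) | tupleAlg X S] =ᵐ[μ] μ[(fun ω => φ (X j ω)) | tupleAlg X (pa j)]

/-- If `A` is an ancestral set in a DAG `G` which is a Bayesian network for `X`, the
residual variances `E[Var(X_j | pa(j))]` are all equal to `σ²`, `j ∉ A` and `pa(j) ⊆ A`,
then `E[Var(X_j | X_A)] = σ²`. -/
theorem resVar_ancestral_eq
    {Ω : Type*} [MeasurableSpace Ω] (μ : Measure Ω) [IsProbabilityMeasure μ]
    {d : ℕ} (X : Fin d → Ω → ℝ) (hX : ∀ j, Measurable (X j))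
    (hL2 : ∀ j, MemLp (X j) 2 μ)
    (pa : Fin d → Finset (Fin d))
    (hacyc : ∀ j, ¬ IsDesc pa j j)
    (hMarkov : MarkovCond μ X pa)
    (σ2 : ℝ) (hres : ∀ j, resVar μ X (pa j) j = σ2)
    (A : Finset (Fin d)) (hA : ∀ i ∈ A, pa i ⊆ A)
    (j : Fin d) (hj : j ∉ A) (hpa : pa j ⊆ A) :
    resVar μ X A j = σ2 := by
  -- every element of `A` is a nondescendant of `j`
  have hnondesc : ∀ i ∈ A, i ≠ j ∧ ¬ IsDesc pa j i := by
    intro i hi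
    have key : ∀ i, IsDesc pa j i → i ∈ A → j ∈ A := by
      intro i hdesc
      induction hdesc with
      | single h => exact fun hiA => hA _ hiA h
      | tail _ h ih => exact fun hiA => ih (hA _ hiA h)
    constructor
    · rintro rfl; exact hj hi
    · intro hdesc; exact hj (key i hdesc hi)
  -- Markov with φ = id: the conditional means agree
  have hMeq := hMarkov j A hpa hnondesc id measurable_id
    (by simpa using (hL2 j).integrable (by norm_num))
  simp only [id] at hMeq
  have hm : ∀ S : Finset (Fin d), tupleAlg X S ≤ ‹MeasurableSpace Ω› := fun S =>
    Measurable.comap_le (measurable_pi_lambda _ fun i => hX i)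
  have hrw : ∀ S : Finset (Fin d), resVar μ X S j =
      ∫ ω, (X j ω - (μ[X j | tupleAlg X S]) ω) ^ 2 ∂μ := by
    intro S
    exact integral_condExp (hm S)
  rw [← hres j, hrw A, hrw (pa j)]
  refine integral_congr_ae ?_
  filter_upwards [hMeq] with ω hω
  have : (μ[X j | tupleAlg X A]) ω = (μ[X j | tupleAlg X (pa j)]) ω := hω
  rw [this]
end

section
/- In the model of the previous statement but with Var(z₃) = 1/3 instead of 1/2, the identifiability condition fails at the second step: E[Var(X₃|X₁)] = 1/3 + 1/3 − 1/81 < 2/3 = E[Var(X₂|X₁)], so the minimum-residual-variance procedure selects X₃ before X₂ and returns an incorrect topological order. -/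
open MeasureTheory ProbabilityTheory

open Real
open scoped NNReal ENNReal


section GaussMoments

lemma int_pow_exp {b : ℝ} (hb : 0 < b) (n : ℕ) :
    Integrable fun x : ℝ => x ^ n * Real.exp (-b * x ^ 2) := by
  have h := integrable_rpow_mul_exp_neg_mul_sq hb
    (s := (n : ℝ)) (neg_one_lt_zero.trans_le (Nat.cast_nonneg n))
  simpa [Real.rpow_natCast] using h

lemma mom_rec {b : ℝ} (hb : 0 < b) (n : ℕ) :
    ∫ x : ℝ, x ^ (n + 2) * Real.exp (-b * x ^ 2) =
      ((n : ℝ) + 1) / (2 * b) * ∫ x : ℝ, x ^ n * Real.exp (-b * x ^ 2) := by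
  have hderiv : ∀ x : ℝ, HasDerivAt (fun y : ℝ => y ^ (n + 1) * Real.exp (-b * y ^ 2))
      (((n : ℝ) + 1) * (x ^ n * Real.exp (-b * x ^ 2)) -
        2 * b * (x ^ (n + 2) * Real.exp (-b * x ^ 2))) x := by
    intro x
    have h1 : HasDerivAt (fun y : ℝ => y ^ (n + 1)) (((n : ℝ) + 1) * x ^ n) x := by
      simpa using hasDerivAt_pow (n + 1) x
    have h0 : HasDerivAt (fun y : ℝ => -b * y ^ 2) (-b * (2 * x)) x := by
      simpa using (hasDerivAt_pow 2 x).const_mul (-b)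
    have h3 := h1.mul h0.exp
    exact h3.congr_deriv (by ring)
  have key := integral_eq_zero_of_hasDerivAt_of_integrable hderiv
      (((int_pow_exp hb n).const_mul _).sub ((int_pow_exp hb (n + 2)).const_mul _))
      (int_pow_exp hb (n + 1))
  rw [integral_sub ((int_pow_exp hb n).const_mul _) ((int_pow_exp hb (n + 2)).const_mul _),
    integral_const_mul, integral_const_mul] at key
  have hb' : (2 : ℝ) * b ≠ 0 := by positivity
  rw [div_mul_eq_mul_div, eq_comm, div_eq_iff hb']
  linear_combination key

lemma mom_one {b : ℝ} (hb : 0 < b) : ∫ x : ℝ, x ^ 1 * Real.exp (-b * x ^ 2) = 0 := by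
  have hderiv : ∀ x : ℝ, HasDerivAt (fun y : ℝ => Real.exp (-b * y ^ 2))
      (-(2 * b) * (x ^ 1 * Real.exp (-b * x ^ 2))) x := by
    intro x
    have h0 : HasDerivAt (fun y : ℝ => -b * y ^ 2) (-b * (2 * x)) x := by
      simpa using (hasDerivAt_pow 2 x).const_mul (-b)
    convert h0.exp using 1
    ring
  have key := integral_eq_zero_of_hasDerivAt_of_integrable hderiv
      ((int_pow_exp hb 1).const_mul _) (integrable_exp_neg_mul_sq hb)
  rw [integral_const_mul] at key
  have h2b : -(2 * b) ≠ 0 := neg_ne_zero.mpr (by positivity)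
  exact (mul_eq_zero.mp key).resolve_left h2b

end GaussMoments
lemma mom_two {b : ℝ} (hb : 0 < b) : ∫ x : ℝ, x ^ 2 * Real.exp (-b * x ^ 2) =
    1 / (2 * b) * ∫ x : ℝ, Real.exp (-b * x ^ 2) := by
  have h := mom_rec hb 0
  simp only [Nat.reduceAdd, Nat.cast_zero, zero_add, pow_zero, one_mul] at h
  rw [h]

lemma mom_three {b : ℝ} (hb : 0 < b) : ∫ x : ℝ, x ^ 3 * Real.exp (-b * x ^ 2) = 0 := by
  have h := mom_rec hb 1
  simp only [Nat.reduceAdd, Nat.cast_one] at h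
  rw [h, mom_one hb, mul_zero]

lemma mom_four {b : ℝ} (hb : 0 < b) : ∫ x : ℝ, x ^ 4 * Real.exp (-b * x ^ 2) =
    3 / (2 * b) * (1 / (2 * b) * ∫ x : ℝ, Real.exp (-b * x ^ 2)) := by
  have h := mom_rec hb 2
  simp only [Nat.reduceAdd, Nat.cast_ofNat] at h
  rw [h, mom_two hb]
  ring


section GaussReal

variable {v : ℝ≥0}

lemma vpos (hv : v ≠ 0) : 0 < (v : ℝ) := by
  exact_mod_cast (zero_le (a := v)).lt_of_ne (Ne.symm hv)

lemma pdf_eq (hv : v ≠ 0) (x : ℝ) :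
    gaussianPDFReal 0 v x = (√(2 * π * v))⁻¹ * Real.exp (-(2 * (v : ℝ))⁻¹ * x ^ 2) := by
  have h := vpos hv
  have hne : (v : ℝ) ≠ 0 := ne_of_gt h
  have harg : -(x - 0) ^ 2 / (2 * (v : ℝ)) = -(2 * (v : ℝ))⁻¹ * x ^ 2 := by
    rw [sub_zero, neg_div, neg_mul, inv_mul_eq_div]
  simp only [gaussianPDFReal, harg]

lemma integral_fun_gaussianReal (hv : v ≠ 0) (g : ℝ → ℝ) :
    ∫ x, g x ∂(gaussianReal 0 v) =
      ∫ x, ((√(2 * π * v))⁻¹ * Real.exp (-(2 * (v : ℝ))⁻¹ * x ^ 2)) * g x := by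
  rw [gaussianReal_of_var_ne_zero 0 hv]
  have hmeas : Measurable fun x => Real.toNNReal (gaussianPDFReal 0 v x) :=
    (measurable_gaussianPDFReal 0 v).real_toNNReal
  have hd : gaussianPDF 0 v =
      fun x => ((Real.toNNReal (gaussianPDFReal 0 v x) : ℝ≥0) : ℝ≥0∞) := rfl
  rw [hd, integral_withDensity_eq_integral_smul hmeas]
  refine integral_congr_ae (Filter.Eventually.of_forall fun x => ?_)
  show (gaussianPDFReal 0 v x).toNNReal • g x = _
  rw [NNReal.smul_def, Real.coe_toNNReal _ (gaussianPDFReal_nonneg 0 v x), smul_eq_mul,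
    pdf_eq hv]

lemma integral_pow_gaussianReal (hv : v ≠ 0) (n : ℕ) :
    ∫ x, x ^ n ∂(gaussianReal 0 v) =
      (√(2 * π * v))⁻¹ * ∫ x : ℝ, x ^ n * Real.exp (-(2 * (v : ℝ))⁻¹ * x ^ 2) := by
  rw [integral_fun_gaussianReal hv fun x => x ^ n]
  rw [show (fun x : ℝ => ((√(2 * π * v))⁻¹ * Real.exp (-(2 * (v : ℝ))⁻¹ * x ^ 2)) * x ^ n)
      = fun x : ℝ => (√(2 * π * v))⁻¹ * (x ^ n * Real.exp (-(2 * (v : ℝ))⁻¹ * x ^ 2))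
    from funext fun x => by ring, integral_const_mul]

lemma sqrt_eq_aux (hv : v ≠ 0) : √(π / (2 * (v : ℝ))⁻¹) = √(2 * π * v) := by
  have h := vpos hv
  congr 1
  field_simp <;> ring

lemma gmom1 (hv : v ≠ 0) : ∫ x, x ^ 1 ∂(gaussianReal 0 v) = 0 := by
  have hb : 0 < (2 * (v : ℝ))⁻¹ := by positivity
  rw [integral_pow_gaussianReal hv, mom_one hb, mul_zero]

lemma gmom3 (hv : v ≠ 0) : ∫ x, x ^ 3 ∂(gaussianReal 0 v) = 0 := by
  have hb : 0 < (2 * (v : ℝ))⁻¹ := by positivity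
  rw [integral_pow_gaussianReal hv, mom_three hb, mul_zero]

lemma gmom2 (hv : v ≠ 0) : ∫ x, x ^ 2 ∂(gaussianReal 0 v) = (v : ℝ) := by
  have hvr := vpos hv
  have hb : 0 < (2 * (v : ℝ))⁻¹ := by positivity
  rw [integral_pow_gaussianReal hv, mom_two hb, integral_gaussian, sqrt_eq_aux hv]
  have hs : (0:ℝ) < √(2 * π * v) := Real.sqrt_pos.mpr (by positivity)
  field_simp <;> ring

lemma gmom4 (hv : v ≠ 0) : ∫ x, x ^ 4 ∂(gaussianReal 0 v) = 3 * (v : ℝ) ^ 2 := by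
  have hvr := vpos hv
  have hb : 0 < (2 * (v : ℝ))⁻¹ := by positivity
  rw [integral_pow_gaussianReal hv, mom_four hb, integral_gaussian, sqrt_eq_aux hv]
  have hs : (0:ℝ) < √(2 * π * v) := Real.sqrt_pos.mpr (by positivity)
  field_simp <;> ring

lemma gInt (hv : v ≠ 0) (n : ℕ) : Integrable (fun x => x ^ n) (gaussianReal 0 v) := by
  have hb : 0 < (2 * (v : ℝ))⁻¹ := by positivity
  rw [gaussianReal_of_var_ne_zero 0 hv,
    integrable_withDensity_iff (measurable_gaussianPDF 0 v)
      (Filter.Eventually.of_forall fun x => ENNReal.ofReal_lt_top)]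
  have : (fun x : ℝ => x ^ n * (gaussianPDF 0 v x).toReal)
      = fun x : ℝ => (√(2 * π * (v : ℝ)))⁻¹ * (x ^ n * Real.exp (-(2 * (v : ℝ))⁻¹ * x ^ 2)) := by
    funext x
    rw [gaussianPDF_def, ENNReal.toReal_ofReal (gaussianPDFReal_nonneg 0 v x), pdf_eq hv]
    ring
  rw [this]
  exact (int_pow_exp hb n).const_mul _

end GaussReal

section Transfer

variable {Ω : Type*} [MeasurableSpace Ω] {μ : Measure Ω} {ζ : Ω → ℝ} {v : ℝ≥0}

lemma moment_rv (hζ : Measurable ζ) (hlaw : Measure.map ζ μ = gaussianReal 0 v) (n : ℕ) :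
    ∫ ω, ζ ω ^ n ∂μ = ∫ x, x ^ n ∂(gaussianReal 0 v) := by
  rw [← hlaw, integral_map hζ.aemeasurable ((measurable_id'.pow_const n).aestronglyMeasurable)]

lemma integrable_rv (hζ : Measurable ζ) (hv : v ≠ 0)
    (hlaw : Measure.map ζ μ = gaussianReal 0 v) (n : ℕ) :
    Integrable (fun ω => ζ ω ^ n) μ := by
  have h := gInt hv n
  rw [← hlaw] at h
  exact (integrable_map_measure (measurable_id'.pow_const n).aestronglyMeasurable hζ.aemeasurable).mp h

end Transfer


/-- Expected conditional variance `E[Var(Y | W)]`. -/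
noncomputable def eCondVar {Ω : Type*} [MeasurableSpace Ω] (μ : Measure Ω) {β : Type*}
    [MeasurableSpace β] (Y : Ω → ℝ) (W : Ω → β) : ℝ :=
  ∫ ω, (μ[(fun ω' =>
      (Y ω' - (μ[Y | MeasurableSpace.comap W (by infer_instance)]) ω') ^ 2)
    | MeasurableSpace.comap W (by infer_instance)]) ω ∂μ

lemma eCondVar_eq_integral {Ω : Type*} [MeasurableSpace Ω] (μ : Measure Ω)
    [IsProbabilityMeasure μ] {Y W : Ω → ℝ} (hW : Measurable W) {g : Ω → ℝ}
    (hg : μ[Y | MeasurableSpace.comap W (by infer_instance)] =ᵐ[μ] g) :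
    eCondVar μ Y W = ∫ ω, (Y ω - g ω) ^ 2 ∂μ := by
  unfold eCondVar
  rw [integral_condExp hW.comap_le]
  exact integral_congr_ae (hg.mono fun ω h => by dsimp only; rw [h])

/-- Same Markov chain `X₁ → X₂ → X₃` but with `Var(z₃) = 1/3`: the identifiability
condition fails at the second step, since
`E[Var(X₃|X₁)] = 1/3 + 1/3 − 1/81 < 2/3 = E[Var(X₂|X₁)]`, so the
minimum-residual-variance procedure selects `X₃` before `X₂` and returns an incorrect
topological order. -/
theorem unequal_variance_nonident
    {Ω : Type*} [MeasurableSpace Ω] (μ : Measure Ω) [IsProbabilityMeasure μ]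
    (z : Fin 3 → Ω → ℝ) (hz : ∀ i, Measurable (z i))
    (hindep : iIndepFun z μ)
    (hlaw₁ : Measure.map (z 0) μ = gaussianReal 0 1)
    (hlaw₂ : Measure.map (z 1) μ = gaussianReal 0 (2 / 3))
    (hlaw₃ : Measure.map (z 2) μ = gaussianReal 0 (1 / 3))
    (X₁ X₂ X₃ : Ω → ℝ)
    (h₁ : X₁ = z 0) (h₂ : ∀ ω, X₂ ω = X₁ ω ^ 2 / 2 + z 1 ω)
    (h₃ : ∀ ω, X₃ ω = X₂ ω ^ 2 / 3 + z 2 ω) :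
    eCondVar μ X₂ X₁ = 2 / 3 ∧
    eCondVar μ X₃ X₁ = 1 / 3 + 1 / 3 - 1 / 81 ∧
    eCondVar μ X₃ X₁ < eCondVar μ X₂ X₁ := by
  subst h₁
  have h23 : (2 / 3 : ℝ≥0) ≠ 0 := by norm_num
  have h13 : (1 / 3 : ℝ≥0) ≠ 0 := by norm_num
  have k23 : ((2 / 3 : ℝ≥0) : ℝ) = 2 / 3 := by norm_num
  have k13 : ((1 / 3 : ℝ≥0) : ℝ) = 1 / 3 := by norm_num
  -- moments
  have Et2 : ∫ ω, z 0 ω ^ 2 ∂μ = 1 := by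
    rw [moment_rv (hz 0) hlaw₁ 2, gmom2 one_ne_zero]; norm_num
  have Et4 : ∫ ω, z 0 ω ^ 4 ∂μ = 3 := by
    rw [moment_rv (hz 0) hlaw₁ 4, gmom4 one_ne_zero]; norm_num
  have Eu1 : ∫ ω, z 1 ω ^ 1 ∂μ = 0 := by rw [moment_rv (hz 1) hlaw₂ 1, gmom1 h23]
  have Eu2 : ∫ ω, z 1 ω ^ 2 ∂μ = 2 / 3 := by rw [moment_rv (hz 1) hlaw₂ 2, gmom2 h23, k23]
  have Eu3 : ∫ ω, z 1 ω ^ 3 ∂μ = 0 := by rw [moment_rv (hz 1) hlaw₂ 3, gmom3 h23]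
  have Eu4 : ∫ ω, z 1 ω ^ 4 ∂μ = 4 / 3 := by
    rw [moment_rv (hz 1) hlaw₂ 4, gmom4 h23, k23]; norm_num
  have Ew1 : ∫ ω, z 2 ω ^ 1 ∂μ = 0 := by rw [moment_rv (hz 2) hlaw₃ 1, gmom1 h13]
  have Ew2 : ∫ ω, z 2 ω ^ 2 ∂μ = 1 / 3 := by rw [moment_rv (hz 2) hlaw₃ 2, gmom2 h13, k13]
  have Ez1 : ∫ ω, z 1 ω ∂μ = 0 := by simpa using Eu1
  have Ez2 : ∫ ω, z 2 ω ∂μ = 0 := by simpa using Ew1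
  -- integrability
  have It : ∀ n, Integrable (fun ω => z 0 ω ^ n) μ :=
    integrable_rv (hz 0) one_ne_zero hlaw₁
  have Iu : ∀ n, Integrable (fun ω => z 1 ω ^ n) μ := integrable_rv (hz 1) h23 hlaw₂
  have Iw : ∀ n, Integrable (fun ω => z 2 ω ^ n) μ := integrable_rv (hz 2) h13 hlaw₃
  have Iu1 : Integrable (z 1) μ := by simpa using Iu 1
  have Iw1 : Integrable (z 2) μ := by simpa using Iw 1
  -- independence
  have h01 : IndepFun (z 0) (z 1) μ := hindep.indepFun (show (0 : Fin 3) ≠ 1 by decide)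
  have h12 : IndepFun (z 1) (z 2) μ := hindep.indepFun (show (1 : Fin 3) ≠ 2 by decide)
  have h10 : IndepFun (z 1) (z 0) μ := h01.symm
  have h20 : IndepFun (z 2) (z 0) μ :=
    (hindep.indepFun (show (0 : Fin 3) ≠ 2 by decide)).symm
  have hp01_2 : IndepFun (fun ω => (z 0 ω, z 1 ω)) (z 2) μ :=
    hindep.indepFun_prodMk hz 0 1 2 (by decide) (by decide)
  have hXw : IndepFun (fun ω => z 0 ω ^ 2 * z 1 ω) (z 2) μ := by
    exact hp01_2.comp ((measurable_fst.pow_const 2).mul measurable_snd) measurable_id'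
  -- measurability w.r.t. comap
  have hmz0 : Measurable[MeasurableSpace.comap (z 0) inferInstance] (z 0) :=
    fun s hs => ⟨s, hs, rfl⟩
  have hmz1 : Measurable[MeasurableSpace.comap (z 1) inferInstance] (z 1) :=
    fun s hs => ⟨s, hs, rfl⟩
  have hmz2 : Measurable[MeasurableSpace.comap (z 2) inferInstance] (z 2) :=
    fun s hs => ⟨s, hs, rfl⟩
  -- conditional expectations of independent parts
  have cz1 : μ[z 1 | MeasurableSpace.comap (z 0) inferInstance]
      =ᵐ[μ] fun _ => ∫ ω, z 1 ω ∂μ :=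
    condExp_indep_eq (hz 1).comap_le (hz 0).comap_le hmz1.stronglyMeasurable h10
  have cz2 : μ[z 2 | MeasurableSpace.comap (z 0) inferInstance]
      =ᵐ[μ] fun _ => ∫ ω, z 2 ω ∂μ :=
    condExp_indep_eq (hz 2).comap_le (hz 0).comap_le hmz2.stronglyMeasurable h20
  -- conditional expectation of X₂
  have hX2f : X₂ = (fun ω => z 0 ω ^ 2 / 2) + z 1 := funext fun ω => h₂ ω
  have IA2 : Integrable (fun ω => z 0 ω ^ 2 / 2) μ := (It 2).div_const 2
  have cX2 : μ[X₂ | MeasurableSpace.comap (z 0) inferInstance]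
      =ᵐ[μ] fun ω => z 0 ω ^ 2 / 2 := by
    rw [hX2f]
    refine (condExp_add IA2 Iu1 (MeasurableSpace.comap (z 0) inferInstance)).trans ?_
    rw [condExp_of_stronglyMeasurable (hz 0).comap_le
      ((hmz0.pow_const 2).div_const 2).stronglyMeasurable IA2]
    filter_upwards [cz1] with ω hω
    simp only [Pi.add_apply, hω, Ez1, add_zero]
  have R2 : eCondVar μ X₂ (z 0) = 2 / 3 := by
    rw [eCondVar_eq_integral μ (hz 0) cX2,
      show (fun ω => (X₂ ω - z 0 ω ^ 2 / 2) ^ 2) = fun ω => z 1 ω ^ 2 from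
        funext fun ω => by rw [h₂ ω]; ring]
    exact Eu2
  -- conditional expectation of X₃
  have hX3f : X₃ = (fun ω => z 0 ω ^ 4 / 12) + (fun ω => z 0 ω ^ 2 / 3) * z 1
      + (fun ω => z 1 ω ^ 2 / 3) + z 2 := by
    funext ω
    simp only [Pi.add_apply, Pi.mul_apply]
    rw [h₃ ω, h₂ ω]; ring
  have I_T1 : Integrable (fun ω => z 0 ω ^ 4 / 12) μ := (It 4).div_const 12
  have ind01sq : IndepFun (fun ω => z 0 ω ^ 2 / 3) (z 1) μ := by
    exact h01.comp ((measurable_id'.pow_const 2).div_const 3) measurable_id'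
  have I_T2 : Integrable ((fun ω => z 0 ω ^ 2 / 3) * z 1) μ :=
    ind01sq.integrable_mul ((It 2).div_const 3) Iu1
  have I_T3 : Integrable (fun ω => z 1 ω ^ 2 / 3) μ := (Iu 2).div_const 3
  have cT1 : μ[(fun ω => z 0 ω ^ 4 / 12) | MeasurableSpace.comap (z 0) inferInstance]
      = fun ω => z 0 ω ^ 4 / 12 :=
    condExp_of_stronglyMeasurable (hz 0).comap_le
      ((hmz0.pow_const 4).div_const 12).stronglyMeasurable I_T1
  have cT2 : μ[(fun ω => z 0 ω ^ 2 / 3) * z 1 | MeasurableSpace.comap (z 0) inferInstance]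
      =ᵐ[μ] (fun ω => z 0 ω ^ 2 / 3) * μ[z 1 | MeasurableSpace.comap (z 0) inferInstance] :=
    condExp_mul_of_stronglyMeasurable_left ((hmz0.pow_const 2).div_const 3).stronglyMeasurable
      I_T2 Iu1
  have cT3 : μ[(fun ω => z 1 ω ^ 2 / 3) | MeasurableSpace.comap (z 0) inferInstance]
      =ᵐ[μ] fun _ => ∫ ω, z 1 ω ^ 2 / 3 ∂μ :=
    condExp_indep_eq (hz 1).comap_le (hz 0).comap_le
      ((hmz1.pow_const 2).div_const 3).stronglyMeasurable h10
  have EC : ∫ ω, z 1 ω ^ 2 / 3 ∂μ = 2 / 9 := by rw [integral_div, Eu2]; norm_num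
  have cX3 : μ[X₃ | MeasurableSpace.comap (z 0) inferInstance]
      =ᵐ[μ] fun ω => z 0 ω ^ 4 / 12 + 2 / 9 := by
    rw [hX3f]
    refine (condExp_add ((I_T1.add I_T2).add I_T3) Iw1 (MeasurableSpace.comap (z 0) inferInstance)).trans ?_
    have s2 := condExp_add (m := MeasurableSpace.comap (z 0) inferInstance)
      (μ := μ) (I_T1.add I_T2) I_T3
    have s3 := condExp_add (m := MeasurableSpace.comap (z 0) inferInstance)
      (μ := μ) I_T1 I_T2
    filter_upwards [s2, s3, cT2, cT3, cz2, cz1] with ω hs2 hs3 hc2 hc3 hc4 hc1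
    simp only [Pi.add_apply] at hs2 hs3 ⊢
    rw [hs2, hs3, cT1, hc2, hc3, hc4, Pi.mul_apply, hc1, Ez1, Ez2, EC]
    ring
  -- monomial expectations
  have hE1 : ∫ ω, z 0 ω ^ 4 * z 1 ω ^ 2 ∂μ = 2 := by
    have h : ∫ ω, z 0 ω ^ 4 * z 1 ω ^ 2 ∂μ
        = (∫ ω, z 0 ω ^ 4 ∂μ) * ∫ ω, z 1 ω ^ 2 ∂μ :=
      (h01.comp (measurable_id'.pow_const 4)
        (measurable_id'.pow_const 2)).integral_fun_mul_eq_mul_integral (It 4).aestronglyMeasurable (Iu 2).aestronglyMeasurable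
    rw [h, Et4, Eu2]; norm_num
  have hE5 : ∫ ω, z 0 ω ^ 2 * z 1 ω ^ 3 ∂μ = 0 := by
    have h : ∫ ω, z 0 ω ^ 2 * z 1 ω ^ 3 ∂μ
        = (∫ ω, z 0 ω ^ 2 ∂μ) * ∫ ω, z 1 ω ^ 3 ∂μ :=
      (h01.comp (measurable_id'.pow_const 2)
        (measurable_id'.pow_const 3)).integral_fun_mul_eq_mul_integral (It 2).aestronglyMeasurable (Iu 3).aestronglyMeasurable
    rw [h, Eu3, mul_zero]
  have hE6 : ∫ ω, z 0 ω ^ 2 * z 1 ω ∂μ = 0 := by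
    have h : ∫ ω, z 0 ω ^ 2 * z 1 ω ∂μ = (∫ ω, z 0 ω ^ 2 ∂μ) * ∫ ω, z 1 ω ∂μ :=
      (h01.comp (measurable_id'.pow_const 2)
        measurable_id').integral_fun_mul_eq_mul_integral (It 2).aestronglyMeasurable Iu1.aestronglyMeasurable
    rw [h, Ez1, mul_zero]
  have IM6 : Integrable (fun ω => z 0 ω ^ 2 * z 1 ω) μ := by
    exact (h01.comp (measurable_id'.pow_const 2) measurable_id').integrable_mul (It 2) Iu1
  have hE7 : ∫ ω, z 0 ω ^ 2 * z 1 ω * z 2 ω ∂μ = 0 := by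
    have h : ∫ ω, z 0 ω ^ 2 * z 1 ω * z 2 ω ∂μ
        = (∫ ω, z 0 ω ^ 2 * z 1 ω ∂μ) * ∫ ω, z 2 ω ∂μ :=
      hXw.integral_fun_mul_eq_mul_integral IM6.aestronglyMeasurable Iw1.aestronglyMeasurable
    rw [h, Ez2, mul_zero]
  have hE9 : ∫ ω, z 1 ω ^ 2 * z 2 ω ∂μ = 0 := by
    have h : ∫ ω, z 1 ω ^ 2 * z 2 ω ∂μ = (∫ ω, z 1 ω ^ 2 ∂μ) * ∫ ω, z 2 ω ∂μ :=
      (h12.comp (measurable_id'.pow_const 2)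
        measurable_id').integral_fun_mul_eq_mul_integral (Iu 2).aestronglyMeasurable Iw1.aestronglyMeasurable
    rw [h, Ez2, mul_zero]
  -- integrability of the ten terms
  have J1 : Integrable (fun ω => (1 / 9 : ℝ) * (z 0 ω ^ 4 * z 1 ω ^ 2)) μ := by
    exact ((h01.comp (measurable_id'.pow_const 4)
      (measurable_id'.pow_const 2)).integrable_mul (It 4) (Iu 2)).const_mul _
  have J2 : Integrable (fun ω => (1 / 9 : ℝ) * z 1 ω ^ 4) μ := (Iu 4).const_mul _
  have J3 : Integrable (fun _ : Ω => (4 / 81 : ℝ)) μ := integrable_const _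
  have J4 : Integrable (fun ω => z 2 ω ^ 2) μ := Iw 2
  have J5 : Integrable (fun ω => (2 / 9 : ℝ) * (z 0 ω ^ 2 * z 1 ω ^ 3)) μ := by
    exact ((h01.comp (measurable_id'.pow_const 2)
      (measurable_id'.pow_const 3)).integrable_mul (It 2) (Iu 3)).const_mul _
  have J6 : Integrable (fun ω => (-4 / 27 : ℝ) * (z 0 ω ^ 2 * z 1 ω)) μ := IM6.const_mul _
  have J7 : Integrable (fun ω => (2 / 3 : ℝ) * (z 0 ω ^ 2 * z 1 ω * z 2 ω)) μ := by
    exact (hXw.integrable_mul IM6 Iw1).const_mul _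
  have J8 : Integrable (fun ω => (-4 / 27 : ℝ) * z 1 ω ^ 2) μ := (Iu 2).const_mul _
  have J9 : Integrable (fun ω => (2 / 3 : ℝ) * (z 1 ω ^ 2 * z 2 ω)) μ := by
    exact ((h12.comp (measurable_id'.pow_const 2)
      measurable_id').integrable_mul (Iu 2) Iw1).const_mul _
  have J10 : Integrable (fun ω => (-4 / 9 : ℝ) * z 2 ω) μ := Iw1.const_mul _
  have S2 : Integrable (fun ω => (1 / 9 : ℝ) * (z 0 ω ^ 4 * z 1 ω ^ 2) + (1 / 9 : ℝ) * z 1 ω ^ 4) μ := by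
    exact J1.add J2
  have S3 : Integrable (fun ω => (1 / 9 : ℝ) * (z 0 ω ^ 4 * z 1 ω ^ 2) + (1 / 9 : ℝ) * z 1 ω ^ 4 + (4 / 81 : ℝ)) μ := by
    exact S2.add J3
  have S4 : Integrable (fun ω => (1 / 9 : ℝ) * (z 0 ω ^ 4 * z 1 ω ^ 2) + (1 / 9 : ℝ) * z 1 ω ^ 4 + (4 / 81 : ℝ) + z 2 ω ^ 2) μ := by
    exact S3.add J4
  have S5 : Integrable (fun ω => (1 / 9 : ℝ) * (z 0 ω ^ 4 * z 1 ω ^ 2) + (1 / 9 : ℝ) * z 1 ω ^ 4 + (4 / 81 : ℝ) + z 2 ω ^ 2 + (2 / 9 : ℝ) * (z 0 ω ^ 2 * z 1 ω ^ 3)) μ := by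
    exact S4.add J5
  have S6 : Integrable (fun ω => (1 / 9 : ℝ) * (z 0 ω ^ 4 * z 1 ω ^ 2) + (1 / 9 : ℝ) * z 1 ω ^ 4 + (4 / 81 : ℝ) + z 2 ω ^ 2 + (2 / 9 : ℝ) * (z 0 ω ^ 2 * z 1 ω ^ 3) + (-4 / 27 : ℝ) * (z 0 ω ^ 2 * z 1 ω)) μ := by
    exact S5.add J6
  have S7 : Integrable (fun ω => (1 / 9 : ℝ) * (z 0 ω ^ 4 * z 1 ω ^ 2) + (1 / 9 : ℝ) * z 1 ω ^ 4 + (4 / 81 : ℝ) + z 2 ω ^ 2 + (2 / 9 : ℝ) * (z 0 ω ^ 2 * z 1 ω ^ 3) + (-4 / 27 : ℝ) * (z 0 ω ^ 2 * z 1 ω) + (2 / 3 : ℝ) * (z 0 ω ^ 2 * z 1 ω * z 2 ω)) μ := by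
    exact S6.add J7
  have S8 : Integrable (fun ω => (1 / 9 : ℝ) * (z 0 ω ^ 4 * z 1 ω ^ 2) + (1 / 9 : ℝ) * z 1 ω ^ 4 + (4 / 81 : ℝ) + z 2 ω ^ 2 + (2 / 9 : ℝ) * (z 0 ω ^ 2 * z 1 ω ^ 3) + (-4 / 27 : ℝ) * (z 0 ω ^ 2 * z 1 ω) + (2 / 3 : ℝ) * (z 0 ω ^ 2 * z 1 ω * z 2 ω) + (-4 / 27 : ℝ) * z 1 ω ^ 2) μ := by
    exact S7.add J8
  have S9 : Integrable (fun ω => (1 / 9 : ℝ) * (z 0 ω ^ 4 * z 1 ω ^ 2) + (1 / 9 : ℝ) * z 1 ω ^ 4 + (4 / 81 : ℝ) + z 2 ω ^ 2 + (2 / 9 : ℝ) * (z 0 ω ^ 2 * z 1 ω ^ 3) + (-4 / 27 : ℝ) * (z 0 ω ^ 2 * z 1 ω) + (2 / 3 : ℝ) * (z 0 ω ^ 2 * z 1 ω * z 2 ω) + (-4 / 27 : ℝ) * z 1 ω ^ 2 + (2 / 3 : ℝ) * (z 1 ω ^ 2 * z 2 ω)) μ := by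
    exact S8.add J9
  have R3 : eCondVar μ X₃ (z 0) = 1 / 3 + 1 / 3 - 1 / 81 := by
    rw [eCondVar_eq_integral μ (hz 0) cX3,
      show (fun ω => (X₃ ω - (z 0 ω ^ 4 / 12 + 2 / 9)) ^ 2)
        = fun ω => (1 / 9 : ℝ) * (z 0 ω ^ 4 * z 1 ω ^ 2) + (1 / 9 : ℝ) * z 1 ω ^ 4
          + (4 / 81 : ℝ) + z 2 ω ^ 2 + (2 / 9 : ℝ) * (z 0 ω ^ 2 * z 1 ω ^ 3)
          + (-4 / 27 : ℝ) * (z 0 ω ^ 2 * z 1 ω)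
          + (2 / 3 : ℝ) * (z 0 ω ^ 2 * z 1 ω * z 2 ω) + (-4 / 27 : ℝ) * z 1 ω ^ 2
          + (2 / 3 : ℝ) * (z 1 ω ^ 2 * z 2 ω) + (-4 / 9 : ℝ) * z 2 ω from
        funext fun ω => by rw [h₃ ω, h₂ ω]; ring]
    rw [integral_add S9 J10, integral_add S8 J9, integral_add S7 J8, integral_add S6 J7,
      integral_add S5 J6, integral_add S4 J5, integral_add S3 J4, integral_add S2 J3,
      integral_add J1 J2]
    rw [integral_const_mul, integral_const_mul, integral_const_mul, integral_const_mul,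
      integral_const_mul, integral_const_mul, integral_const_mul, integral_const_mul]
    rw [hE1, Eu4, integral_const, Ew2, hE5, hE6, hE7, Eu2, hE9, Ez2]
    simp [measure_univ]
    norm_num
  refine ⟨R2, R3, ?_⟩
  rw [R2, R3]
  norm_num
end
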